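/- Let G_t(z) solve the ODE ∂_t G_t(z) = 2G_t(z)/(G_t(z) − 1) with G_0(z) = z. Then for each t ≥ 0, G_t is analytic at 0 with G_t(0) = 0 and G_t'(0) = exp(−2t). -/

import Mathlib

open Complex Filter Set Topology

noncomputable section

/-- The auxiliary map `F w = w * exp (-w)`. -/
def loewnerF (w : ℂ) : ℂ := w * Complex.exp (-w)

lemma loewnerF_hasStrictDerivAt (w : ℂ) :
    HasStrictDerivAt loewnerF ((1 - w) * Complex.exp (-w)) w := by
  have h1 : HasStrictDerivAt (fun x : ℂ => Complex.exp (-x))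
      (Complex.exp (-w) * (-1)) w := by
    exact (Complex.hasStrictDerivAt_exp (-w)).comp w ((hasStrictDerivAt_id w).neg)
  have := (hasStrictDerivAt_id w).mul h1
  have e : (1 - w) * Complex.exp (-w) = 1 * Complex.exp (-w) + id w * (Complex.exp (-w) * (-1)) := by
    simp only [id]; ring
  rw [e]; exact this

lemma loewnerF_hasDerivAt (w : ℂ) :
    HasDerivAt loewnerF ((1 - w) * Complex.exp (-w)) w :=
  (loewnerF_hasStrictDerivAt w).hasDerivAt

/-- norm bound: for `‖w‖ ≤ 1/10`, `‖F'(w) - 1‖ ≤ 1/2`. -/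
lemma loewnerF_deriv_bound {w : ℂ} (hw : ‖w‖ ≤ 1/10) :
    ‖(1 - w) * Complex.exp (-w) - 1‖ ≤ 1/2 := by
  have h1 : ‖Complex.exp (-w) - 1‖ ≤ 2 * ‖w‖ := by
    have : ‖-w‖ ≤ 1 := by rw [norm_neg]; linarith
    simpa [norm_neg] using Complex.norm_exp_sub_one_le this
  have h2 : ‖Complex.exp (-w)‖ ≤ 3 := by
    rw [Complex.norm_exp]
    have hre : (-w).re ≤ 1 := by
      have := Complex.abs_re_le_norm (-w)
      rw [norm_neg] at this
      have := abs_le.mp this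
      simp only [Complex.neg_re] at *
      linarith
    calc Real.exp (-w).re ≤ Real.exp 1 := Real.exp_le_exp.mpr hre
      _ ≤ 3 := by linarith [Real.exp_one_lt_d9]
  have key : (1 - w) * Complex.exp (-w) - 1
      = (Complex.exp (-w) - 1) - w * Complex.exp (-w) := by ring
  rw [key]
  calc ‖(Complex.exp (-w) - 1) - w * Complex.exp (-w)‖
      ≤ ‖Complex.exp (-w) - 1‖ + ‖w * Complex.exp (-w)‖ := by
        exact (norm_sub_le _ _)
    _ ≤ 2 * ‖w‖ + ‖w‖ * 3 := by
        rw [norm_mul]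
        gcongr
    _ ≤ 2 * (1/10) + (1/10) * 3 := by gcongr
    _ = 1/2 := by norm_num

/-- `F` is injective on the closed ball of radius `1/10`. -/
lemma loewnerF_injOn : ∀ a ∈ Metric.closedBall (0 : ℂ) (1/10),
    ∀ b ∈ Metric.closedBall (0 : ℂ) (1/10), loewnerF a = loewnerF b → a = b := by
  intro a ha b hb hab
  set s := Metric.closedBall (0 : ℂ) (1/10)
  have hconv : Convex ℝ s := convex_closedBall _ _
  have hf : ∀ x ∈ s, HasFDerivWithinAt (fun w => loewnerF w - w)
      (ContinuousLinearMap.smulRight (1 : ℂ →L[ℂ] ℂ)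
        ((1 - x) * Complex.exp (-x) - 1)) s x := by
    intro x _
    have := (loewnerF_hasDerivAt x).sub (hasDerivAt_id x)
    exact this.hasFDerivAt.hasFDerivWithinAt
  have hbound : ∀ x ∈ s, ‖ContinuousLinearMap.smulRight (1 : ℂ →L[ℂ] ℂ)
      ((1 - x) * Complex.exp (-x) - 1)‖ ≤ 1/2 := by
    intro x hx
    rw [ContinuousLinearMap.norm_smulRight_apply, ContinuousLinearMap.one_def, ContinuousLinearMap.norm_id, one_mul]
    have hx' : ‖x‖ ≤ 1/10 := by
      simpa [Complex.dist_eq] using Metric.mem_closedBall.mp hx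
    simpa using loewnerF_deriv_bound hx'
  have := Convex.norm_image_sub_le_of_norm_hasFDerivWithin_le hf hbound hconv ha hb
  rw [hab] at this
  have h2 : ‖b - a‖ ≤ (1/2) * ‖b - a‖ := by
    have e : loewnerF b - b - (loewnerF b - a) = -(b - a) := by ring
    rw [e, norm_neg] at this
    exact this
  have : ‖b - a‖ ≤ 0 := by linarith
  have : b - a = 0 := by
    have := norm_nonneg (b - a)
    have h0 : ‖b - a‖ = 0 := le_antisymm ‹‖b - a‖ ≤ 0› this
    exact norm_eq_zero.mp h0
  linear_combination -this


/-- Constancy of `F(G_s z) e^{2s}` as long as the flow stays in the small ball. -/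
lemma loewner_const (G : ℝ → ℂ → ℂ) (r : ℝ)
    (hinit : ∀ z ∈ Metric.ball (0 : ℂ) r, G 0 z = z)
    (hODE : ∀ z ∈ Metric.ball (0 : ℂ) r, ∀ t : ℝ, 0 ≤ t →
      HasDerivAt (fun s => G s z) (2 * G t z / (G t z - 1)) t)
    {z : ℂ} (hzr : z ∈ Metric.ball (0 : ℂ) r) {s : ℝ} (hs : 0 ≤ s)
    (hsmall : ∀ u ∈ Icc 0 s, ‖G u z‖ < 1/10) :
    loewnerF (G s z) * Complex.exp (2*(s:ℂ)) = loewnerF z := by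
  set g : ℝ → ℂ := fun u => loewnerF (G u z) * Complex.exp (2*(u:ℂ)) with hg
  have hder : ∀ u ∈ Icc 0 s, HasFDerivWithinAt g (0 : ℝ →L[ℝ] ℂ) (Icc 0 s) u := by
    intro u hu
    have hw : ‖G u z‖ < 1/10 := hsmall u hu
    have hGne : G u z - 1 ≠ 0 := by
      intro h
      have h1 : G u z = 1 := by linear_combination h
      rw [h1] at hw
      norm_num at hw
    have hG := hODE z hzr u hu.1
    have h1 : HasDerivAt (fun v : ℝ => loewnerF (G v z))
        (((1 - G u z) * Complex.exp (-(G u z))) * (2 * G u z / (G u z - 1))) u :=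
      HasDerivAt.comp (h₂ := loewnerF) u (loewnerF_hasDerivAt (G u z)) hG
    have h2c : HasDerivAt (fun w : ℂ => Complex.exp (2*w))
        (Complex.exp (2*(u:ℂ)) * 2) (u:ℂ) := by
      have := (Complex.hasDerivAt_exp (2*(u:ℂ))).comp (u:ℂ)
        ((hasDerivAt_id (u:ℂ)).const_mul 2)
      exact this.congr_deriv (by ring)
    have h2 : HasDerivAt (fun v : ℝ => Complex.exp (2*(v:ℂ)))
        (Complex.exp (2*(u:ℂ)) * 2) u := h2c.comp_ofReal
    have hmul := h1.mul h2
    have hmul' : HasDerivAt g 0 u := by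
      refine hmul.congr_deriv ?_
      rw [loewnerF]
      field_simp
      ring
    have h0 : ContinuousLinearMap.toSpanSingleton ℝ (0:ℂ) = 0 := by
      ext
      simp
    have := hmul'.hasFDerivAt.hasFDerivWithinAt (s := Icc 0 s)
    rwa [h0] at this
  have hle := Convex.norm_image_sub_le_of_norm_hasFDerivWithin_le
      (f' := fun _ => (0 : ℝ →L[ℝ] ℂ)) (C := 0) hder (fun x _ => by simp) (convex_Icc 0 s)
      (left_mem_Icc.mpr hs) (right_mem_Icc.mpr hs)
  rw [zero_mul] at hle
  have h0 : g s = g 0 := by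
    have := le_antisymm hle (norm_nonneg _)
    have := norm_eq_zero.mp this
    linear_combination this
  have : g 0 = loewnerF z := by
    simp only [hg, Complex.ofReal_zero, mul_zero, Complex.exp_zero, mul_one,
      hinit z hzr]
  rw [← this, ← h0]


set_option maxHeartbeats 1000000 in
/-- Trapping: the flow started in the ball of radius `1/20` stays in the ball of
radius `1/10`, and the conservation law holds for all time. -/
lemma loewner_trap (G : ℝ → ℂ → ℂ) (r : ℝ)
    (hinit : ∀ z ∈ Metric.ball (0 : ℂ) r, G 0 z = z)
    (hODE : ∀ z ∈ Metric.ball (0 : ℂ) r, ∀ t : ℝ, 0 ≤ t →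
      HasDerivAt (fun s => G s z) (2 * G t z / (G t z - 1)) t)
    {z : ℂ} (hzr : z ∈ Metric.ball (0 : ℂ) r) (hz : ‖z‖ < 1/20)
    {s : ℝ} (hs : 0 ≤ s) :
    (∀ u ∈ Icc 0 s, ‖G u z‖ < 1/10) ∧
      loewnerF (G s z) = loewnerF z * Complex.exp (-2*(s:ℂ)) := by
  have habsz : ‖loewnerF z‖ ≤ 1/19 := by
    rw [loewnerF, norm_mul, Complex.norm_exp]
    have hre : (-z).re ≤ 1/20 := by
      have h1 := abs_le.mp (Complex.abs_re_le_norm z)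
      simp only [Complex.neg_re]
      linarith
    have hexp : Real.exp (-z).re ≤ 20/19 := by
      have h1 : 1 - (-z).re ≤ Real.exp (-(-z).re) := by
        have := Real.add_one_le_exp (-(-z).re); linarith
      have h2 : (19/20 : ℝ) ≤ Real.exp (-(-z).re) := by linarith
      have h3 : Real.exp (-z).re = (Real.exp (-(-z).re))⁻¹ := by
        rw [← Real.exp_neg, neg_neg]
      rw [h3]
      calc (Real.exp (-(-z).re))⁻¹ ≤ ((19:ℝ)/20)⁻¹ := by
            apply inv_anti₀ (by norm_num) h2
        _ = 20/19 := by norm_num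
    calc ‖z‖ * Real.exp (-z).re ≤ (1/20) * (20/19) := by
          apply mul_le_mul (le_of_lt hz) hexp (Real.exp_nonneg _) (by norm_num)
      _ = 1/19 := by norm_num
  have hG0 : G 0 z = z := hinit z hzr
  have claimA : ∀ u ∈ Icc 0 s, ‖G u z‖ < 1/10 := by
    by_contra hcon
    push_neg at hcon
    obtain ⟨u₀, hu₀, hge⟩ := hcon
    set C : Set ℝ := Icc 0 s ∩ (fun u => ‖G u z‖) ⁻¹' Ici (1/10) with hC
    have hCne : C.Nonempty := ⟨u₀, hu₀, hge⟩
    have hcontG : ∀ u : ℝ, 0 ≤ u → ContinuousAt (fun v => G v z) u := fun u hu =>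
      (hODE z hzr u hu).continuousAt
    have hcont : ContinuousOn (fun u => G u z) (Icc 0 s) := fun u hu =>
      (hcontG u hu.1).continuousWithinAt
    have hCclosed : IsClosed C :=
      ContinuousOn.preimage_isClosed_of_isClosed
        (continuous_norm.comp_continuousOn hcont) isClosed_Icc isClosed_Ici
    have hCbdd : BddBelow C := ⟨0, fun x hx => hx.1.1⟩
    set T := sInf C with hT
    have hTC : T ∈ C := hCclosed.csInf_mem hCne hCbdd
    have hT0' : 0 ≤ T := hTC.1.1
    have hTs : T ≤ s := hTC.1.2
    have hTabs : (1:ℝ)/10 ≤ ‖G T z‖ := hTC.2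
    have hT0 : 0 < T := by
      rcases eq_or_lt_of_le hT0' with h | h
      · exfalso
        rw [← h, hG0] at hTabs
        linarith
      · exact h
    have hbefore : ∀ u : ℝ, 0 ≤ u → u < T → ‖G u z‖ < 1/10 := by
      intro u hu huT
      by_contra hcon2
      push_neg at hcon2
      have huC : u ∈ C := ⟨⟨hu, le_trans (le_of_lt huT) hTs⟩, hcon2⟩
      exact absurd (csInf_le hCbdd huC) (not_le.mpr huT)
    have hIco : Ico 0 T ∈ 𝓝[<] T := by
      rw [mem_nhdsWithin]
      exact ⟨Ioi 0, isOpen_Ioi, hT0, fun u hu => ⟨le_of_lt hu.1, hu.2⟩⟩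
    have hNB : (𝓝[<] T).NeBot := nhdsLT_neBot T
    -- |G T z| = 1/10
    have habsT : ‖G T z‖ = 1/10 := by
      refine le_antisymm ?_ hTabs
      have htend : Tendsto (fun u => ‖G u z‖) (𝓝[<] T)
          (𝓝 (‖G T z‖)) :=
        ((continuous_norm.continuousAt.comp (hcontG T hT0')).continuousWithinAt)
      refine le_of_tendsto htend ?_
      filter_upwards [hIco] with u hu
      exact le_of_lt (hbefore u hu.1 hu.2)
    -- conservation law up to T by continuity
    have hFlim : loewnerF (G T z) * Complex.exp (2*(T:ℂ)) = loewnerF z := by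
      have hcontF : ContinuousAt (fun u : ℝ => loewnerF (G u z) * Complex.exp (2*(u:ℂ))) T := by
        apply ContinuousAt.mul
        · have hFcont : Continuous loewnerF := by
            unfold loewnerF; continuity
          exact hFcont.continuousAt.comp (hcontG T hT0')
        · exact Continuous.continuousAt (by continuity)
      have h1 : Tendsto (fun u : ℝ => loewnerF (G u z) * Complex.exp (2*(u:ℂ)))
          (𝓝[<] T) (𝓝 (loewnerF (G T z) * Complex.exp (2*(T:ℂ)))) :=
        hcontF.continuousWithinAt
      have h2 : Tendsto (fun u : ℝ => loewnerF (G u z) * Complex.exp (2*(u:ℂ)))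
          (𝓝[<] T) (𝓝 (loewnerF z)) := by
        apply Tendsto.congr' _ tendsto_const_nhds
        filter_upwards [hIco] with u hu
        exact (loewner_const G r hinit hODE hzr hu.1
          (fun v hv => hbefore v hv.1 (lt_of_le_of_lt hv.2 hu.2))).symm
      exact tendsto_nhds_unique h1 h2
    -- contradiction via absolute values
    have hlhs : (9:ℝ)/100 ≤ ‖loewnerF (G T z)‖ := by
      rw [loewnerF, norm_mul, Complex.norm_exp, habsT]
      have hre : (-(G T z)).re ≥ -(1/10) := by
        have h1 := abs_le.mp (Complex.abs_re_le_norm (G T z))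
        simp only [Complex.neg_re]
        rw [habsT] at h1
        linarith [h1.2]
      have hexp : (9:ℝ)/10 ≤ Real.exp (-(G T z)).re := by
        have h1 : (9:ℝ)/10 ≤ Real.exp (-(1/10)) := by
          have := Real.add_one_le_exp (-(1/10 : ℝ)); linarith
        exact le_trans h1 (Real.exp_le_exp.mpr hre)
      linarith
    have hexpT : (1:ℝ) ≤ Real.exp (2*T) := by
      rw [← Real.exp_zero]
      exact Real.exp_le_exp.mpr (by linarith)
    have habs_eq : ‖loewnerF (G T z)‖ * Real.exp (2*T)
        = ‖loewnerF z‖ := by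
      rw [← hFlim, norm_mul, Complex.norm_exp]
      norm_num
    nlinarith [norm_nonneg (loewnerF (G T z))]
  refine ⟨claimA, ?_⟩
  have hid := loewner_const G r hinit hODE hzr hs claimA
  have h2 : loewnerF (G s z) * Complex.exp (2*(s:ℂ)) * Complex.exp (-2*(s:ℂ))
      = loewnerF (G s z) := by
    rw [mul_assoc, ← Complex.exp_add]
    norm_num
  rw [← h2, hid]

/-- let `G_t z` solve `∂_t G_t z = 2 G_t z / (G_t z - 1)` with
`G_0 z = z` (for `z` in a neighborhood of `0`).  Then for each `t ≥ 0`, `G_t` is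
analytic at `0` with `G_t 0 = 0` and `G_t'(0) = exp (-2 t)`. -/
theorem loewner_flow_deriv_at_zero (G : ℝ → ℂ → ℂ) (r : ℝ) (hr : 0 < r)
    (hinit : ∀ z ∈ Metric.ball (0 : ℂ) r, G 0 z = z)
    (hODE : ∀ z ∈ Metric.ball (0 : ℂ) r, ∀ t : ℝ, 0 ≤ t →
      HasDerivAt (fun s => G s z) (2 * G t z / (G t z - 1)) t) :
    ∀ t : ℝ, 0 ≤ t →
      AnalyticAt ℂ (G t) 0 ∧ G t 0 = 0 ∧ deriv (G t) 0 = Complex.exp (-2 * t) := by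
  intro t ht
  -- inverse function setup for `F`
  have hF0 : loewnerF 0 = 0 := by simp [loewnerF]
  have hFd0 : HasStrictDerivAt loewnerF 1 0 := by
    simpa using loewnerF_hasStrictDerivAt 0
  have heq1 : (ContinuousLinearMap.smulRight (1 : ℂ →L[ℂ] ℂ) (1:ℂ))
      = ((ContinuousLinearEquiv.refl ℂ ℂ : ℂ ≃L[ℂ] ℂ) : ℂ →L[ℂ] ℂ) := by
    ext
    simp
  have hF : HasStrictFDerivAt loewnerF
      ((ContinuousLinearEquiv.refl ℂ ℂ : ℂ ≃L[ℂ] ℂ) : ℂ →L[ℂ] ℂ) 0 := by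
    rw [← heq1]
    exact hFd0
  set φ := hF.toOpenPartialHomeomorph loewnerF with hφ
  have φcoe : ⇑φ = loewnerF := hF.toOpenPartialHomeomorph_coe
  have hsrc : (0:ℂ) ∈ φ.source := hF.mem_toOpenPartialHomeomorph_source
  have htgt : (0:ℂ) ∈ φ.target := by
    have := hF.image_mem_toOpenPartialHomeomorph_target
    rwa [hF0] at this
  have hL0 : φ.symm 0 = 0 := by
    have h1 := φ.left_inv hsrc
    have h2 : φ 0 = 0 := by rw [show φ 0 = loewnerF 0 from by rw [φcoe], hF0]
    rwa [h2] at h1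
  set V : Set ℂ := φ.target ∩ φ.symm ⁻¹' (Metric.ball (0:ℂ) (1/10)) with hV
  have hVopen : IsOpen V := by
    have := φ.symm.isOpen_inter_preimage (Metric.isOpen_ball (x := (0:ℂ)) (ε := 1/10))
    rwa [φ.symm_source] at this
  have h0V : (0:ℂ) ∈ V := by
    refine ⟨htgt, ?_⟩
    simp [hL0]
  have hderivsymm : ∀ b ∈ V,
      HasDerivAt φ.symm (((1 - φ.symm b) * Complex.exp (-(φ.symm b)))⁻¹) b := by
    intro b hb
    apply φ.hasDerivAt_symm hb.1
    · apply mul_ne_zero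
      · intro h
        have h1 : φ.symm b = 1 := by linear_combination -h
        have h2 : ‖φ.symm b‖ < 1/10 := by
          simpa [Complex.dist_eq] using hb.2
        rw [h1] at h2
        norm_num at h2
      · exact Complex.exp_ne_zero _
    · rw [φcoe]
      exact loewnerF_hasDerivAt _
  have hLana : AnalyticAt ℂ φ.symm 0 := by
    apply DifferentiableOn.analyticAt (s := V)
    · intro b hb
      exact (hderivsymm b hb).differentiableAt.differentiableWithinAt
    · exact hVopen.mem_nhds h0V
  have hL1 : HasDerivAt φ.symm 1 0 := by
    have := hderivsymm 0 h0V
    rw [hL0] at this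
    simpa using this
  -- the explicit analytic candidate
  set ψ : ℂ → ℂ := fun w => loewnerF w * Complex.exp (-2*(t:ℂ)) with hψ
  have hψ0 : ψ 0 = 0 := by simp [hψ, hF0]
  have hψd : HasDerivAt ψ (Complex.exp (-2*(t:ℂ))) 0 := by
    have h := (loewnerF_hasDerivAt 0).mul_const (Complex.exp (-2*(t:ℂ)))
    have h2 : ((1:ℂ) - 0) * Complex.exp (-(0:ℂ)) * Complex.exp (-2*(t:ℂ))
        = Complex.exp (-2*(t:ℂ)) := by simp
    rw [h2] at h
    exact h
  have hψana : AnalyticAt ℂ ψ 0 := by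
    apply DifferentiableOn.analyticAt (s := (univ : Set ℂ)) _ univ_mem
    intro x _
    apply DifferentiableAt.differentiableWithinAt
    have : DifferentiableAt ℂ loewnerF x := (loewnerF_hasDerivAt x).differentiableAt
    exact this.mul_const _
  -- eventual equality of `G t` with the candidate
  set δ : ℝ := min (r/2) (1/20) with hδ
  have hδpos : 0 < δ := lt_min (by linarith) (by norm_num)
  have hδr : Metric.ball (0:ℂ) δ ⊆ Metric.ball (0:ℂ) r :=
    Metric.ball_subset_ball (by
      have : δ ≤ r/2 := min_le_left _ _
      linarith)
  have heqv : G t =ᶠ[𝓝 0] fun w => φ.symm (ψ w) := by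
    have h1 : Metric.ball (0:ℂ) δ ∈ 𝓝 (0:ℂ) := Metric.ball_mem_nhds _ hδpos
    have h2 : ψ ⁻¹' V ∈ 𝓝 (0:ℂ) := by
      apply hψd.continuousAt.preimage_mem_nhds
      rw [hψ0]
      exact hVopen.mem_nhds h0V
    filter_upwards [h1, h2] with w hw1 hw2
    have hwr : w ∈ Metric.ball (0:ℂ) r := hδr hw1
    have hwabs : ‖w‖ < 1/20 := by
      have h3 : ‖w‖ < δ := by simpa [Complex.dist_eq] using hw1
      have h4 : δ ≤ 1/20 := min_le_right _ _
      linarith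
    obtain ⟨hsm, hFid⟩ := loewner_trap G r hinit hODE hwr hwabs ht
    have hGsmall : ‖G t w‖ < 1/10 := hsm t (right_mem_Icc.mpr ht)
    have hmem : ψ w ∈ φ.target := hw2.1
    have hLsmall : ‖φ.symm (ψ w)‖ < 1/10 := by
      simpa [Complex.dist_eq] using hw2.2
    have hFL : loewnerF (φ.symm (ψ w)) = ψ w := by
      have := φ.right_inv hmem
      rwa [φcoe] at this
    apply loewnerF_injOn _ _ _ _ (hFid.trans hFL.symm)
    · simp only [Metric.mem_closedBall, Complex.dist_eq, sub_zero]
      exact le_of_lt hGsmall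
    · simp only [Metric.mem_closedBall, Complex.dist_eq, sub_zero]
      exact le_of_lt hLsmall
  refine ⟨?_, ?_, ?_⟩
  · have h1 : AnalyticAt ℂ (fun w => φ.symm (ψ w)) 0 := by
      have h2 : AnalyticAt ℂ φ.symm (ψ 0) := by rw [hψ0]; exact hLana
      exact h2.comp hψana
    exact h1.congr heqv.symm
  · have := heqv.eq_of_nhds
    rw [this, hψ0, hL0]
  · have hL1' : HasDerivAt φ.symm 1 (ψ 0) := by rw [hψ0]; exact hL1
    have hcomp : HasDerivAt (fun w => φ.symm (ψ w)) (1 * Complex.exp (-2*(t:ℂ))) 0 :=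
      hL1'.comp 0 hψd
    have hG : HasDerivAt (G t) (1 * Complex.exp (-2*(t:ℂ))) 0 :=
      hcomp.congr_of_eventuallyEq heqv
    rw [hG.deriv, one_mul]
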